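/- Let μ ≥ 0, ν ≥ 0 and t ∈ [−1, 1]. Set d = 2ν(1−t)² + 2μ(1−t) + 1 and A = 2(1 + 2μ(1−t))/d. Then: (i) d = 2νt² − 2(2ν+μ)t + 1 + 2ν + 2μ; (ii) d > 0; (iii) 0 < A ≤ 2; and (iv) every complex root z of z² − Az + 1 = 0 satisfies |z| = 1. Consequently the amplification matrix of the Crank–Nicolson scheme in Fourier variables (with t = cos(ξh)) has both eigenvalues of modulus exactly 1 for every real dual variable ξ, i.e. the scheme approximating the Cauchy problem for the rod equation is absolutely stable. -/

import Mathlib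

private lemma roots_mod_one (A : ℝ) (h1 : 0 < A) (h2 : A ≤ 2) :
    ∀ z : ℂ, z ^ 2 - (A : ℂ) * z + 1 = 0 → ‖z‖ = 1 := by
  intro z hz
  have hconj : (starRingEnd ℂ) z ^ 2 - (A : ℂ) * (starRingEnd ℂ) z + 1 = 0 := by
    have := congrArg (starRingEnd ℂ) hz
    simpa using this
  have hfac : (z - (starRingEnd ℂ) z) * (z + (starRingEnd ℂ) z - (A : ℂ)) = 0 := by
    linear_combination hz - hconj
  rcases mul_eq_zero.mp hfac with h | h
  · have hreal : (starRingEnd ℂ) z = z := (sub_eq_zero.mp h).symm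
    have hz' : z = (z.re : ℂ) := (Complex.conj_eq_iff_re.mp hreal).symm ▸ rfl
    set x := z.re with hx
    have hre : x ^ 2 - A * x + 1 = 0 := by
      have : ((x ^ 2 - A * x + 1 : ℝ) : ℂ) = 0 := by
        push_cast
        rw [← hz']
        exact hz
      exact_mod_cast this
    have hx1 : x = 1 := by nlinarith [sq_nonneg (x - 1), sq_nonneg x, sq_nonneg (x + 1)]
    rw [hz', hx1]
    simp
  · have hprod : z * (starRingEnd ℂ) z = 1 := by
      linear_combination z * h - hz
    have : (Complex.normSq z : ℂ) = 1 := by rw [← Complex.mul_conj]; exact hprod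
    have hns : Complex.normSq z = 1 := by exact_mod_cast this
    have := Complex.sq_norm z
    rw [hns] at this
    nlinarith [norm_nonneg z]

private lemma key (μ ν t : ℝ) (hμ : 0 ≤ μ) (hν : 0 ≤ ν) (ht₁ : -1 ≤ t) (ht₂ : t ≤ 1) :
    0 < 2 * ν * (1 - t) ^ 2 + 2 * μ * (1 - t) + 1
    ∧ 0 < 2 * (1 + 2 * μ * (1 - t)) / (2 * ν * (1 - t) ^ 2 + 2 * μ * (1 - t) + 1)
    ∧ 2 * (1 + 2 * μ * (1 - t)) / (2 * ν * (1 - t) ^ 2 + 2 * μ * (1 - t) + 1) ≤ 2 := by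
  have h1t : 0 ≤ 1 - t := by linarith
  have hd : 0 < 2 * ν * (1 - t) ^ 2 + 2 * μ * (1 - t) + 1 := by positivity
  refine ⟨hd, ?_, ?_⟩
  · apply div_pos (by positivity) hd
  · rw [div_le_iff₀ hd]; nlinarith [sq_nonneg (1 - t)]

theorem crank_nicolson_absolute_stability
    (μ ν : ℝ) (hμ : 0 ≤ μ) (hν : 0 ≤ ν)
    (t : ℝ) (ht₁ : -1 ≤ t) (ht₂ : t ≤ 1)
    (d A : ℝ)
    (hd : d = 2 * ν * (1 - t) ^ 2 + 2 * μ * (1 - t) + 1)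
    (hA : A = 2 * (1 + 2 * μ * (1 - t)) / d) :
    d = 2 * ν * t ^ 2 - 2 * (2 * ν + μ) * t + 1 + 2 * ν + 2 * μ
    ∧ 0 < d
    ∧ (0 < A ∧ A ≤ 2)
    ∧ (∀ z : ℂ, z ^ 2 - (A : ℂ) * z + 1 = 0 → ‖z‖ = 1)
    ∧ (∀ ξ hstep : ℝ, ∀ z : ℂ,
        z ^ 2 - ((-(4 * μ * Real.cos (ξ * hstep) - 2 - 4 * μ) /
            (2 * ν * Real.cos (ξ * hstep) ^ 2 - 2 * (2 * ν + μ) * Real.cos (ξ * hstep)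
              + 1 + 2 * ν + 2 * μ) : ℝ) : ℂ) * z + 1 = 0 →
          ‖z‖ = 1) := by
  obtain ⟨hd0, hA0, hA2⟩ := key μ ν t hμ hν ht₁ ht₂
  rw [← hd] at hd0 hA0 hA2
  rw [← hA] at hA0 hA2
  refine ⟨by rw [hd]; ring, hd0, ⟨hA0, hA2⟩, roots_mod_one A hA0 hA2, ?_⟩
  intro ξ hstep z hz
  set c := Real.cos (ξ * hstep) with hc
  have hc1 : -1 ≤ c := Real.neg_one_le_cos _
  have hc2 : c ≤ 1 := Real.cos_le_one _
  obtain ⟨hd0', hA0', hA2'⟩ := key μ ν c hμ hν hc1 hc2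
  have heq : -(4 * μ * c - 2 - 4 * μ) /
      (2 * ν * c ^ 2 - 2 * (2 * ν + μ) * c + 1 + 2 * ν + 2 * μ)
      = 2 * (1 + 2 * μ * (1 - c)) / (2 * ν * (1 - c) ^ 2 + 2 * μ * (1 - c) + 1) := by
    rw [show (2 * ν * c ^ 2 - 2 * (2 * ν + μ) * c + 1 + 2 * ν + 2 * μ)
        = 2 * ν * (1 - c) ^ 2 + 2 * μ * (1 - c) + 1 by ring]
    ring_nf
  rw [heq] at hz
  exact roots_mod_one _ hA0' hA2' z hz
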